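/- Let E be a real normed vector space, let n ≥ 1 be an integer and c > 0. For 0 ≤ j ≤ n let C_j ⊆ E be a subset, and for 0 ≤ j ≤ n−1 let A_j : E → E be a continuous linear equivalence with A_j(C_j) ⊆ C_{j+1}, and let s_0, …, s_{n−1} be real numbers such that ‖A_j^{−1} w‖ ≤ s_j·‖w‖ for every w ∈ A_j(C_j) and every 0 ≤ j ≤ n−1, and such that ∏_{j=n−k}^{n−1} s_j ≤ e^{−c·k} for every 1 ≤ k ≤ n. Then for every 0 ≤ j ≤ n−1 and every v ∈ C_j one has ‖(A_{n−1} ∘ A_{n−2} ∘ ⋯ ∘ A_j)(v)‖ ≥ e^{c·(n−j)}·‖v‖. -/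

import Mathlib

open Finset

/-- `chainApply A j k v` is `(A (j+k-1) ∘ ⋯ ∘ A (j+1) ∘ A j) v`. -/
noncomputable def chainApply {E : Type*} [NormedAddCommGroup E] [NormedSpace ℝ E]
    (A : ℕ → E ≃L[ℝ] E) (j : ℕ) : ℕ → E → E
  | 0 => id
  | (k + 1) => fun v => A (j + k) (chainApply A j k v)

/-- If the linear maps `A j` carry the cones `C j` into `C (j+1)`, the inverse maps
contract by factors `s j` on the image cones, and the products
`∏_{j=n-k}^{n-1} s j ≤ e^{-ck}` for `1 ≤ k ≤ n` (i.e. `n` is a `c`-cone-hyperbolic time),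
then every vector of `C j` is expanded by the composition `A (n-1) ∘ ⋯ ∘ A j`
by a factor at least `e^{c(n-j)}`. -/
theorem expansion_at_cone_hyperbolic_time
    {E : Type*} [NormedAddCommGroup E] [NormedSpace ℝ E]
    (n : ℕ) (hn : 1 ≤ n) (c : ℝ) (hc : 0 < c)
    (C : ℕ → Set E) (A : ℕ → E ≃L[ℝ] E) (s : ℕ → ℝ)
    (hinv : ∀ j < n, (A j) '' (C j) ⊆ C (j + 1))
    (hnorm : ∀ j < n, ∀ w ∈ (A j) '' (C j), ‖(A j).symm w‖ ≤ s j * ‖w‖)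
    (hprod : ∀ k : ℕ, 1 ≤ k → k ≤ n →
      ∏ j ∈ Finset.Ico (n - k) n, s j ≤ Real.exp (-c * k)) :
    ∀ j < n, ∀ v ∈ C j,
      Real.exp (c * ((n - j : ℕ) : ℝ)) * ‖v‖ ≤ ‖chainApply A j (n - j) v‖ := by
  have key : ∀ k : ℕ, ∀ j : ℕ, j + k ≤ n → ∀ v ∈ C j, v ≠ 0 →
      chainApply A j k v ∈ C (j + k) ∧
      ‖v‖ ≤ (∏ i ∈ Finset.Ico j (j + k), s i) * ‖chainApply A j k v‖ := by
    intro k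
    induction k with
    | zero =>
      intro j hj v hv _
      constructor
      · simpa [chainApply] using hv
      · simp [chainApply]
    | succ k ih =>
      intro j hj v hv hv0
      obtain ⟨hmem, hle⟩ := ih j (by omega) v hv hv0
      have hjk : j + k < n := by omega
      have hw : A (j + k) (chainApply A j k v) ∈ (A (j + k)) '' (C (j + k)) :=
        Set.mem_image_of_mem _ hmem
      have hmem' : chainApply A j (k + 1) v ∈ C (j + (k + 1)) :=
        hinv (j + k) hjk hw
      have hn1 : ‖chainApply A j k v‖ ≤ s (j + k) * ‖chainApply A j (k + 1) v‖ := by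
        have := hnorm (j + k) hjk _ hw
        simpa [chainApply] using this
      refine ⟨hmem', ?_⟩
      have hvpos : 0 < ‖v‖ := norm_pos_iff.mpr hv0
      have hcn : 0 ≤ ‖chainApply A j k v‖ := norm_nonneg _
      have hP : 0 < ∏ i ∈ Finset.Ico j (j + k), s i := by
        by_contra h
        push_neg at h
        nlinarith
      have hstep : (∏ i ∈ Finset.Ico j (j + k), s i) * ‖chainApply A j k v‖ ≤
          (∏ i ∈ Finset.Ico j (j + (k + 1)), s i) * ‖chainApply A j (k + 1) v‖ := by
        have : ∏ i ∈ Finset.Ico j (j + (k + 1)), s i =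
            (∏ i ∈ Finset.Ico j (j + k), s i) * s (j + k) := by
          rw [show j + (k + 1) = (j + k) + 1 by omega,
            Finset.prod_Ico_succ_top (by omega : j ≤ j + k)]
        rw [this, mul_assoc]
        exact mul_le_mul_of_nonneg_left hn1 hP.le
      linarith
  intro j hj v hv
  rcases eq_or_ne v 0 with rfl | hv0
  · simpa using norm_nonneg (chainApply A j (n - j) 0)
  obtain ⟨_, hle⟩ := key (n - j) j (by omega) v hv hv0
  have hIco : Finset.Ico j (j + (n - j)) = Finset.Ico (n - (n - j)) n := by
    congr 1 <;> omega
  have hp := hprod (n - j) (by omega) (by omega)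
  rw [hIco] at hle
  have hcn : 0 ≤ ‖chainApply A j (n - j) v‖ := norm_nonneg _
  have h2 : ‖v‖ ≤ Real.exp (-c * ((n - j : ℕ) : ℝ)) * ‖chainApply A j (n - j) v‖ :=
    hle.trans (mul_le_mul_of_nonneg_right hp hcn)
  have hE : 0 < Real.exp (c * ((n - j : ℕ) : ℝ)) := Real.exp_pos _
  have := mul_le_mul_of_nonneg_left h2 hE.le
  calc Real.exp (c * ((n - j : ℕ) : ℝ)) * ‖v‖
      ≤ Real.exp (c * ((n - j : ℕ) : ℝ)) *
        (Real.exp (-c * ((n - j : ℕ) : ℝ)) * ‖chainApply A j (n - j) v‖) := this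
    _ = ‖chainApply A j (n - j) v‖ := by
        rw [← mul_assoc, ← Real.exp_add]
        ring_nf
        simp
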